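/- For every ε > 0, the ε-covering number of the infinite-dimensional hyperrectangle E_∞ = {x ∈ ℓ^∞ : |x_n| ≤ μ_n for all n} with respect to the sup-norm equals ∏_{n=1}^∞ ⌈μ_n/ε⌉; consequently the metric entropy satisfies H(ε; E_∞, ‖·‖_∞) = ∑_{n=1}^∞ log⌈μ_n/ε⌉. -/

import Mathlib

open Filter Metric ENNReal

/-- The `ε`-covering number (with centers allowed anywhere in the ambient space),
as an extended natural number. -/
noncomputable def coveringNumber {X : Type*} [PseudoMetricSpace X] (ε : ℝ) (K : Set X) : ℕ∞ :=
  sInf {n : ℕ∞ | ∃ S : Finset X, (S.card : ℕ∞) = n ∧ K ⊆ ⋃ x ∈ S, Metric.closedBall x ε}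

/-- Metric entropy: binary logarithm of the covering number. -/
noncomputable def metricEntropy {X : Type*} [PseudoMetricSpace X] (ε : ℝ) (K : Set X) : ℝ :=
  Real.logb 2 ((coveringNumber ε K).toNat : ℝ)


/-- center of the k-th covering interval -/
noncomputable def cpt (a ε : ℝ) (k : ℕ) : ℝ := -a + (2*k+1) * (a / ⌈a/ε⌉₊)

/-- k-th packing point -/
noncomputable def ppt (a ε : ℝ) (k : ℕ) : ℝ :=
  if ⌈a/ε⌉₊ ≤ 1 then 0 else -a + k * (2*a/(⌈a/ε⌉₊ - 1))

lemma cover1 {a ε y : ℝ} (ha : 0 < a) (hε : 0 < ε) (hy : |y| ≤ a) :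
    ∃ k < ⌈a/ε⌉₊, |y - cpt a ε k| ≤ ε := by
  set m : ℕ := ⌈a/ε⌉₊ with hmdef
  have hm : 0 < m := Nat.ceil_pos.mpr (div_pos ha hε)
  have hmR : (0:ℝ) < (m:ℝ) := by exact_mod_cast hm
  set w : ℝ := (y + a) * m / (2*a) with hwdef
  have hw0 : 0 ≤ w := by
    apply div_nonneg
    · apply mul_nonneg _ hmR.le
      nlinarith [abs_le.mp hy]
    · linarith
  have hwm : w ≤ m := by
    rw [hwdef, div_le_iff₀ (by linarith)]
    nlinarith [abs_le.mp hy]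
  refine ⟨min (m-1) ⌊w⌋₊, ?_, ?_⟩
  · exact lt_of_le_of_lt (min_le_left _ _) (Nat.sub_lt hm one_pos)
  set k : ℕ := min (m-1) ⌊w⌋₊ with hkdef
  have hkw : (k:ℝ) ≤ w ∧ w ≤ (k:ℝ) + 1 := by
    by_cases hc : ⌊w⌋₊ ≤ m - 1
    · have hk : k = ⌊w⌋₊ := min_eq_right hc
      rw [hk]
      exact ⟨Nat.floor_le hw0, (Nat.lt_floor_add_one w).le⟩
    · push_neg at hc
      have hk : k = m - 1 := min_eq_left hc.le
      have hmw : (m:ℝ) ≤ w := le_trans (by exact_mod_cast Nat.le_of_lt_succ (by omega)) (Nat.floor_le hw0)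
      have hcast : ((m-1:ℕ):ℝ) = (m:ℝ) - 1 := by
        rw [Nat.cast_sub hm]; norm_num
      rw [hk, hcast]
      constructor <;> linarith
  have hya : y + a = (2*a/m) * w := by
    rw [hwdef]; field_simp
  have key : y - cpt a ε k = (a/m) * (2*w - 2*k - 1) := by
    rw [cpt, ← hmdef]
    have : y = 2 * a / ↑m * w - a := by linarith [hya]
    rw [this]; field_simp; ring
  rw [key, abs_mul]
  have h1 : |a/m| = a/m := abs_of_pos (div_pos ha hmR)
  have h2 : |2*w - 2*(k:ℝ) - 1| ≤ 1 := by
    rw [abs_le]; constructor <;> nlinarith [hkw.1, hkw.2]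
  have h3 : a/m ≤ ε := by
    rw [div_le_iff₀ hmR]
    have := Nat.le_ceil (a/ε)
    rw [← hmdef] at this
    calc a = (a/ε) * ε := by field_simp
    _ ≤ m * ε := by nlinarith
    _ = ε * m := by ring
  calc |a/m| * |2*w - 2*(k:ℝ) - 1| ≤ (a/m) * 1 := by
        rw [h1]; exact mul_le_mul_of_nonneg_left h2 (div_pos ha hmR).le
    _ ≤ ε := by rw [mul_one]; exact h3

lemma pack_mem {a ε : ℝ} {k : ℕ} (ha : 0 < a) (hε : 0 < ε) (hk : k < ⌈a/ε⌉₊) :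
    |ppt a ε k| ≤ a := by
  rw [ppt]
  split_ifs with h
  · simpa using ha.le
  · push_neg at h
    set m : ℕ := ⌈a/ε⌉₊
    have hm2 : (2:ℝ) ≤ (m:ℝ) := by exact_mod_cast h
    have hd : 0 < 2*a/((m:ℝ)-1) := div_pos (by linarith) (by linarith)
    have hkm : (k:ℝ) ≤ (m:ℝ) - 1 := by
      have : (k:ℝ) ≤ (m:ℝ) - 1 ↔ (k:ℝ) + 1 ≤ (m:ℝ) := by constructor <;> intro <;> linarith
      rw [this]; exact_mod_cast hk
    have hub : (k:ℝ) * (2*a/((m:ℝ)-1)) ≤ 2*a := by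
      calc (k:ℝ) * (2*a/((m:ℝ)-1)) ≤ ((m:ℝ)-1) * (2*a/((m:ℝ)-1)) :=
            mul_le_mul_of_nonneg_right hkm hd.le
        _ = 2*a := by
            have hne1 : (m:ℝ)-1 ≠ 0 := by linarith
            field_simp
    have hlb : 0 ≤ (k:ℝ) * (2*a/((m:ℝ)-1)) := mul_nonneg (Nat.cast_nonneg k) hd.le
    rw [abs_le]; constructor <;> linarith

lemma pack_sep {a ε : ℝ} {k k' : ℕ} (ha : 0 < a) (hε : 0 < ε)
    (hk : k < ⌈a/ε⌉₊) (hk' : k' < ⌈a/ε⌉₊) (hne : k ≠ k') :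
    2*ε < |ppt a ε k - ppt a ε k'| := by
  rw [ppt, ppt]
  split_ifs with h
  · omega
  · push_neg at h
    set m : ℕ := ⌈a/ε⌉₊ with hmdef
    have hm2 : (2:ℝ) ≤ (m:ℝ) := by exact_mod_cast h
    have hd : 2*ε < 2*a/((m:ℝ)-1) := by
      rw [lt_div_iff₀ (by linarith)]
      have hc : (m:ℝ) < a/ε + 1 := by
        rw [hmdef]; exact Nat.ceil_lt_add_one (div_pos ha hε).le
      have : ((m:ℝ)-1) < a/ε := by linarith
      calc 2*ε*((m:ℝ)-1) < 2*ε*(a/ε) := by nlinarith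
        _ = 2*a := by
            have hne1 : ε ≠ 0 := hε.ne'
            field_simp
    have h1 : (1:ℝ) ≤ |(k:ℝ) - (k':ℝ)| := by
      have hz : (k:ℤ) - (k':ℤ) ≠ 0 := sub_ne_zero.mpr (by exact_mod_cast hne)
      have := Int.one_le_abs hz
      calc (1:ℝ) ≤ |(((k:ℤ) - (k':ℤ)):ℝ)| := by exact_mod_cast this
        _ = |(k:ℝ) - (k':ℝ)| := by push_cast; ring_nf
    have heq : -a + (k:ℝ) * (2*a/((m:ℝ)-1)) - (-a + (k':ℝ) * (2*a/((m:ℝ)-1)))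
        = ((k:ℝ) - (k':ℝ)) * (2*a/((m:ℝ)-1)) := by ring
    rw [heq, abs_mul, abs_of_pos (by linarith : (0:ℝ) < 2*a/((m:ℝ)-1))]
    nlinarith

lemma memℓp_of_eventually_zero {g : ℕ → ℝ} (N : ℕ) (h : ∀ n, N ≤ n → g n = 0) :
    Memℓp g ∞ := by
  apply memℓp_infty
  have hsub : Set.range (fun n => ‖g n‖) ⊆ ↑((Finset.range (N+1)).image fun n => ‖g n‖) := by
    rintro _ ⟨n, rfl⟩
    by_cases hn : n < N + 1
    · exact Finset.mem_coe.mpr (Finset.mem_image.mpr ⟨n, Finset.mem_range.mpr hn, rfl⟩)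
    · refine Finset.mem_coe.mpr (Finset.mem_image.mpr ⟨N, Finset.self_mem_range_succ N, ?_⟩)
      simp only [h N le_rfl, h n (by omega : N ≤ n)]
  exact (Set.Finite.subset (Finset.finite_toSet _) hsub).bddAbove

set_option maxHeartbeats 1000000 in
theorem stmt9 (μ : ℕ → ℝ) (hpos : ∀ n, 0 < μ n) (hlim : Tendsto μ atTop (nhds 0))
    (ε : ℝ) (hε : 0 < ε) :
    ((coveringNumber ε
          {x : lp (fun _ : ℕ => ℝ) ⊤ | ∀ n : ℕ, |(x : ℕ → ℝ) n| ≤ μ n}) : ℝ≥0∞)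
        = ∏' n : ℕ, ((⌈μ n / ε⌉₊ : ℕ) : ℝ≥0∞) ∧
      metricEntropy ε {x : lp (fun _ : ℕ => ℝ) ⊤ | ∀ n : ℕ, |(x : ℕ → ℝ) n| ≤ μ n}
        = ∑' n : ℕ, Real.logb 2 (⌈μ n / ε⌉₊ : ℝ) := by
  classical
  set E : Set (lp (fun _ : ℕ => ℝ) ⊤) :=
    {x : lp (fun _ : ℕ => ℝ) ⊤ | ∀ n : ℕ, |(x : ℕ → ℝ) n| ≤ μ n} with hEdef
  -- choose N with μ n < ε beyond N
  obtain ⟨N, hN⟩ : ∃ N, ∀ n ≥ N, μ n < ε := by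
    obtain ⟨N, hN⟩ := Metric.tendsto_atTop.mp hlim ε hε
    exact ⟨N, fun n hn => by
      have := hN n hn
      rwa [Real.dist_eq, sub_zero, abs_of_pos (hpos n)] at this⟩
  have hm_pos : ∀ n, 0 < ⌈μ n / ε⌉₊ := fun n => Nat.ceil_pos.mpr (div_pos (hpos n) hε)
  have hm1 : ∀ n, N ≤ n → ⌈μ n / ε⌉₊ = 1 := by
    intro n hn
    refine le_antisymm (Nat.ceil_le.mpr ?_) (hm_pos n)
    rw [Nat.cast_one, div_le_one hε]
    exact (hN n hn).le
  -- the centers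
  have memC : ∀ σ : (∀ j : Fin N, Fin (⌈μ j / ε⌉₊)),
      Memℓp (fun n => if h : n < N then cpt (μ n) ε (σ ⟨n, h⟩) else 0) ∞ :=
    fun σ => memℓp_of_eventually_zero N (fun n hn => dif_neg (not_lt.mpr hn))
  let C : (∀ j : Fin N, Fin (⌈μ j / ε⌉₊)) → lp (fun _ : ℕ => ℝ) ⊤ := fun σ => ⟨_, memC σ⟩
  -- packing points
  have memP : ∀ σ : (∀ j : Fin N, Fin (⌈μ j / ε⌉₊)),
      Memℓp (fun n => if h : n < N then ppt (μ n) ε (σ ⟨n, h⟩) else 0) ∞ :=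
    fun σ => memℓp_of_eventually_zero N (fun n hn => dif_neg (not_lt.mpr hn))
  let P : (∀ j : Fin N, Fin (⌈μ j / ε⌉₊)) → lp (fun _ : ℕ => ℝ) ⊤ := fun σ => ⟨_, memP σ⟩
  have coordC : ∀ σ (n : ℕ) (h : n < N), (C σ : ℕ → ℝ) n = cpt (μ n) ε (σ ⟨n, h⟩) :=
    fun σ n h => dif_pos h
  have coordC0 : ∀ σ (n : ℕ), ¬ n < N → (C σ : ℕ → ℝ) n = 0 := fun σ n h => dif_neg h
  have coordP : ∀ σ (n : ℕ) (h : n < N), (P σ : ℕ → ℝ) n = ppt (μ n) ε (σ ⟨n, h⟩) :=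
    fun σ n h => dif_pos h
  have coordP0 : ∀ σ (n : ℕ), ¬ n < N → (P σ : ℕ → ℝ) n = 0 := fun σ n h => dif_neg h
  have key : coveringNumber ε E = (Fintype.card (∀ j : Fin N, Fin (⌈μ j / ε⌉₊)) : ℕ∞) := by
    apply le_antisymm
    · -- upper bound
      have hcov : E ⊆ ⋃ x ∈ Finset.image C Finset.univ, closedBall x ε := by
        intro x hx
        have hsel := fun j : Fin N => cover1 (hpos j) hε (hx j)
        choose k hk hkb using hsel
        refine Set.mem_iUnion₂.mpr ⟨C (fun j => ⟨k j, hk j⟩),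
          Finset.mem_image_of_mem _ (Finset.mem_univ _), ?_⟩
        rw [mem_closedBall, dist_eq_norm]
        refine lp.norm_le_of_forall_le hε.le (fun n => ?_)
        have esub : ((x - C (fun j => ⟨k j, hk j⟩)) : ℕ → ℝ) n
            = (x : ℕ → ℝ) n - (C (fun j => ⟨k j, hk j⟩) : ℕ → ℝ) n := rfl
        calc ‖((x - C (fun j => ⟨k j, hk j⟩)) : ℕ → ℝ) n‖
            = |(x : ℕ → ℝ) n - (C (fun j => ⟨k j, hk j⟩) : ℕ → ℝ) n| := by
              rw [esub, Real.norm_eq_abs]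
          _ ≤ ε := by
              by_cases h : n < N
              · rw [coordC (fun j => ⟨k j, hk j⟩) n h]
                exact hkb ⟨n, h⟩
              · rw [coordC0 (fun j => ⟨k j, hk j⟩) n h, sub_zero]
                exact (hx n).trans (hN n (not_lt.mp h)).le
      refine le_trans (sInf_le ⟨_, rfl, hcov⟩) ?_
      exact_mod_cast (Finset.card_image_le).trans (le_of_eq Finset.card_univ)
    · -- lower bound
      refine le_sInf ?_
      rintro b ⟨S, rfl, hcov⟩
      have hPE : ∀ σ, P σ ∈ E := by
        intro σ
        rw [hEdef]
        simp only [Set.mem_setOf_eq]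
        intro n
        by_cases h : n < N
        · calc |(P σ : ℕ → ℝ) n| = |ppt (μ n) ε (σ ⟨n, h⟩)| := by rw [coordP σ n h]
            _ ≤ μ n := pack_mem (hpos n) hε (σ ⟨n, h⟩).isLt
        · calc |(P σ : ℕ → ℝ) n| = |(0:ℝ)| := by rw [coordP0 σ n h]
            _ ≤ μ n := by simpa using (hpos n).le
      have hball := fun σ => Set.mem_iUnion₂.mp (hcov (hPE σ))
      choose f hfS hfB using hball
      have hinj : Function.Injective fun σ => (⟨f σ, hfS σ⟩ : {x // x ∈ S}) := by
        intro σ σ' hEq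
        by_contra hne
        obtain ⟨j, hj⟩ := Function.ne_iff.mp hne
        have hjv : (σ j : ℕ) ≠ (σ' j : ℕ) := fun hc => hj (Fin.ext hc)
        have h2 : 2*ε < |ppt (μ j) ε (σ j) - ppt (μ j) ε (σ' j)| :=
          pack_sep (hpos j) hε (σ j).isLt (σ' j).isLt hjv
        have hfe : f σ = f σ' := congrArg Subtype.val hEq
        have h1 : dist (P σ) (P σ') ≤ 2*ε := by
          have t1 := mem_closedBall.mp (hfB σ)
          have t2 := mem_closedBall.mp (hfB σ')
          calc dist (P σ) (P σ') ≤ dist (P σ) (f σ) + dist (f σ) (P σ') :=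
                dist_triangle _ _ _
            _ ≤ ε + ε := add_le_add t1 (by rw [hfe, dist_comm]; exact t2)
            _ = 2*ε := by ring
        have h3 : |ppt (μ j) ε (σ j) - ppt (μ j) ε (σ' j)| ≤ dist (P σ) (P σ') := by
          rw [dist_eq_norm]
          have hb := lp.norm_apply_le_norm ENNReal.top_ne_zero (P σ - P σ') (j : ℕ)
          rw [lp.coeFn_sub, Pi.sub_apply, Real.norm_eq_abs,
            coordP σ (j:ℕ) j.isLt, coordP σ' (j:ℕ) j.isLt] at hb
          exact hb
        linarith
      have hcard : Fintype.card (∀ j : Fin N, Fin (⌈μ j / ε⌉₊)) ≤ S.card := by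
        have := Fintype.card_le_of_injective _ hinj
        rwa [Fintype.card_coe] at this
      exact_mod_cast hcard
  have cardI : Fintype.card (∀ j : Fin N, Fin (⌈μ j / ε⌉₊))
      = ∏ j ∈ Finset.range N, ⌈μ j / ε⌉₊ := by
    rw [Fintype.card_pi]
    simp only [Fintype.card_fin]
    exact Fin.prod_univ_eq_prod_range (fun j => ⌈μ j / ε⌉₊) N
  have hsupp : ∀ n ∉ Finset.range N, ((⌈μ n / ε⌉₊ : ℕ) : ℝ≥0∞) = 1 := by
    intro n hn
    rw [hm1 n (by simpa using hn)]
    simp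
  have hzero : ∀ n ∉ Finset.range N, Real.logb 2 (⌈μ n / ε⌉₊ : ℝ) = 0 := by
    intro n hn
    rw [hm1 n (by simpa using hn)]
    simp
  constructor
  · rw [key, ENat.toENNReal_coe, cardI, tprod_eq_prod hsupp, Nat.cast_prod]
  · rw [metricEntropy, key, ENat.toNat_coe, cardI, tsum_eq_sum hzero,
      Nat.cast_prod, Real.logb_prod]
    intro j hj
    exact_mod_cast (hm_pos j).ne'
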